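/- Let G be a locally finite antitree with root v and sphere sizes s_n := |S_n(v)|, and let J be the Jacobi matrix on ℓ²(ℕ) with off-diagonal entries a_n = √(s_n s_{n+1}) and diagonal entries b_n = 0, with domain the finitely supported sequences. Then the adjacency operator A_G and J have the same deficiency indices: η₊(A_G) = η₊(J) and η₋(A_G) = η₋(J). -/

import Mathlib

noncomputable section

open scoped ComplexConjugate

set_option maxHeartbeats 800000

namespace DefIdx

/-- The Hilbert space `ℓ²(V)` of square-summable complex functions on `V`. -/
abbrev L2 (V : Type*) := lp (fun _ : V => ℂ) 2

lemma memℓp_of_finite {V : Type*} {f : V → ℂ} (h : {x | f x ≠ 0}.Finite) :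
    Memℓp f 2 :=
  (memℓp_zero h).of_exponent_ge (zero_le : (0 : ENNReal) ≤ 2)

/-- The subspace `C_c(V)` of finitely supported elements of `ℓ²(V)`. -/
def Cc (V : Type*) : Submodule ℂ (L2 V) where
  carrier := {f | {x | (f : ∀ _ : V, ℂ) x ≠ 0}.Finite}
  zero_mem' := by
    simp only [Set.mem_setOf_eq, lp.coeFn_zero, Pi.zero_apply, ne_eq, not_true_eq_false]
    simp
  add_mem' := by
    intro f g hf hg
    refine (hf.union hg).subset ?_
    intro x hx
    simp only [Set.mem_setOf_eq, lp.coeFn_add, Pi.add_apply] at hx ⊢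
    by_contra hc
    try push_neg at hc
    simp only [Set.mem_union, Set.mem_setOf_eq, not_or, not_not] at hc
    simp [hc.1, hc.2] at hx
  smul_mem' := by
    intro c f hf
    refine hf.subset ?_
    intro x hx
    simp only [Set.mem_setOf_eq, lp.coeFn_smul, Pi.smul_apply, smul_eq_mul] at hx ⊢
    intro h0
    simp [h0] at hx

section Adjacency

variable {V : Type*}

/-- The pointwise action of the adjacency matrix of a locally finite graph. -/
def adjA (G : SimpleGraph V) (hG : G.LocallyFinite) (f : V → ℂ) (x : V) : ℂ :=
  ∑ y ∈ @SimpleGraph.neighborFinset V G x (hG x), f y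

lemma adjA_support (G : SimpleGraph V) (hG : G.LocallyFinite) {f : V → ℂ}
    (hf : {x | f x ≠ 0}.Finite) : {x | adjA G hG f x ≠ 0}.Finite := by
  have hsub : {x | adjA G hG f x ≠ 0} ⊆ ⋃ y ∈ {x | f x ≠ 0}, (G.neighborSet y) := by
    intro x hx
    obtain ⟨y, hy, hfy⟩ := Finset.exists_ne_zero_of_sum_ne_zero hx
    have hadj : G.Adj x y := by
      have := @SimpleGraph.mem_neighborFinset V G x (hG x) y
      exact this.mp hy
    exact Set.mem_biUnion hfy (SimpleGraph.mem_neighborSet G y x |>.mpr hadj.symm)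
  exact (hf.biUnion fun y _ => by haveI := hG y; exact (G.neighborSet y).toFinite).subset hsub

/-- The adjacency operator of a locally finite graph, as a densely defined operator
on `ℓ²(V)` with domain the finitely supported functions. -/
def adjOp (G : SimpleGraph V) (hG : G.LocallyFinite) : L2 V →ₗ.[ℂ] L2 V where
  domain := Cc V
  toFun :=
    { toFun := fun f => ⟨adjA G hG f, memℓp_of_finite (adjA_support G hG f.2)⟩
      map_add' := by
        intro f g
        apply lp.ext
        funext x
        simp only [lp.coeFn_add, Pi.add_apply]
        show adjA G hG (((f : L2 V) + (g : L2 V) : L2 V)) x = _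
        simp only [adjA, lp.coeFn_add, Pi.add_apply]
        exact Finset.sum_add_distrib
      map_smul' := by
        intro c f
        apply lp.ext
        funext x
        simp only [RingHom.id_apply, lp.coeFn_smul, Pi.smul_apply, smul_eq_mul]
        show adjA G hG ((c • (f : L2 V) : L2 V)) x = _
        simp only [adjA, lp.coeFn_smul, Pi.smul_apply, smul_eq_mul]
        exact (Finset.mul_sum _ _ _).symm }

/-- The pointwise action of the combinatorial (physical) Laplacian. -/
def lapA (G : SimpleGraph V) (hG : G.LocallyFinite) (f : V → ℂ) (x : V) : ℂ :=
  ∑ y ∈ @SimpleGraph.neighborFinset V G x (hG x), (f x - f y)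

lemma lapA_support (G : SimpleGraph V) (hG : G.LocallyFinite) {f : V → ℂ}
    (hf : {x | f x ≠ 0}.Finite) : {x | lapA G hG f x ≠ 0}.Finite := by
  have hsub : {x | lapA G hG f x ≠ 0} ⊆
      {x | f x ≠ 0} ∪ ⋃ y ∈ {x | f x ≠ 0}, (G.neighborSet y) := by
    intro x hx
    by_contra hc
    simp only [Set.mem_union, Set.mem_setOf_eq, not_or, not_not] at hc
    obtain ⟨hfx, hmem⟩ := hc
    apply hx
    show lapA G hG f x = 0
    unfold lapA
    refine Finset.sum_eq_zero fun y hy => ?_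
    have hadj : G.Adj x y := (@SimpleGraph.mem_neighborFinset V G x (hG x) y).mp hy
    have hfy : f y = 0 := by
      by_contra hfy
      exact hmem (Set.mem_biUnion hfy ((SimpleGraph.mem_neighborSet G y x).mpr hadj.symm))
    rw [hfx, hfy, sub_zero]
  refine Set.Finite.subset ?_ hsub
  exact hf.union (hf.biUnion fun y _ => by haveI := hG y; exact (G.neighborSet y).toFinite)

/-- The combinatorial (physical) Laplacian of a locally finite graph, as a densely
defined operator on `ℓ²(V)` with domain the finitely supported functions. -/
def lapOp (G : SimpleGraph V) (hG : G.LocallyFinite) : L2 V →ₗ.[ℂ] L2 V where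
  domain := Cc V
  toFun :=
    { toFun := fun f => ⟨lapA G hG f, memℓp_of_finite (lapA_support G hG f.2)⟩
      map_add' := by
        intro f g
        apply lp.ext
        funext x
        simp only [lp.coeFn_add, Pi.add_apply]
        show lapA G hG (((f : L2 V) + (g : L2 V) : L2 V)) x = _
        simp only [lapA, lp.coeFn_add, Pi.add_apply]
        rw [← Finset.sum_add_distrib]
        exact Finset.sum_congr rfl fun y _ => by ring
      map_smul' := by
        intro c f
        apply lp.ext
        funext x
        simp only [RingHom.id_apply, lp.coeFn_smul, Pi.smul_apply, smul_eq_mul]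
        show lapA G hG ((c • (f : L2 V) : L2 V)) x = _
        simp only [lapA, lp.coeFn_smul, Pi.smul_apply, smul_eq_mul]
        rw [Finset.mul_sum]
        exact Finset.sum_congr rfl fun y _ => by ring }

end Adjacency

section Jacobi

/-- The pointwise action of the Jacobi matrix with off-diagonal entries `a n` and
diagonal entries `b n` (with the convention `a (-1) = 0`). -/
def jacA (a b : ℕ → ℝ) (f : ℕ → ℂ) (n : ℕ) : ℂ :=
  (if n = 0 then 0 else (a (n - 1) : ℂ) * f (n - 1)) + (b n : ℂ) * f n + (a n : ℂ) * f (n + 1)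

lemma jacA_support (a b : ℕ → ℝ) {f : ℕ → ℂ} (hf : {n | f n ≠ 0}.Finite) :
    {n | jacA a b f n ≠ 0}.Finite := by
  have hsub : {n | jacA a b f n ≠ 0} ⊆
      (fun m => m + 1) '' {n | f n ≠ 0} ∪ {n | f n ≠ 0} ∪ (fun m => m - 1) '' {n | f n ≠ 0} := by
    intro n hn
    by_contra hc
    simp only [Set.mem_union, not_or] at hc
    apply hn
    show jacA a b f n = 0
    have h1 : f n = 0 := by
      by_contra h; exact hc.1.2 h
    have h3 : f (n + 1) = 0 := by
      by_contra h
      exact hc.2 ⟨n + 1, h, by show n + 1 - 1 = n; omega⟩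
    rcases Nat.eq_zero_or_pos n with h0 | h0
    · subst h0; simp [jacA, h1, h3]
    · have h2 : f (n - 1) = 0 := by
        by_contra h
        exact hc.1.1 ⟨n - 1, h, by show n - 1 + 1 = n; omega⟩
      simp [jacA, h1, h2, h3]
  refine Set.Finite.subset ?_ hsub
  exact ((hf.image _).union hf).union (hf.image _)

/-- The Jacobi matrix with off-diagonal entries `a n > 0` and diagonal entries `b n`,
as a densely defined operator on `ℓ²(ℕ)` with domain the finitely supported sequences. -/
def jacOp (a b : ℕ → ℝ) : L2 ℕ →ₗ.[ℂ] L2 ℕ where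
  domain := Cc ℕ
  toFun :=
    { toFun := fun f => ⟨jacA a b f, memℓp_of_finite (jacA_support a b f.2)⟩
      map_add' := by
        intro f g
        apply lp.ext
        funext n
        simp only [lp.coeFn_add, Pi.add_apply]
        show jacA a b (((f : L2 ℕ) + (g : L2 ℕ) : L2 ℕ)) n = _
        simp only [jacA, lp.coeFn_add, Pi.add_apply]
        split <;> ring
      map_smul' := by
        intro c f
        apply lp.ext
        funext n
        simp only [RingHom.id_apply, lp.coeFn_smul, Pi.smul_apply, smul_eq_mul]
        show jacA a b ((c • (f : L2 ℕ) : L2 ℕ)) n = _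
        simp only [jacA, lp.coeFn_smul, Pi.smul_apply, smul_eq_mul]
        split <;> ring }

end Jacobi

section Eta

variable {H : Type*} [NormedAddCommGroup H] [InnerProductSpace ℂ H] [CompleteSpace H]

/-- The deficiency subspace `ker (T* - z)` of a (partially defined) operator. -/
def defSubspace (T : H →ₗ.[ℂ] H) (z : ℂ) : Submodule ℂ T.adjoint.domain :=
  LinearMap.ker (T.adjoint.toFun - z • T.adjoint.domain.subtype)

/-- The deficiency index `η₊(T) = dim ker (T* - i)`. -/
def etaP (T : H →ₗ.[ℂ] H) : Cardinal := Module.rank ℂ (defSubspace T Complex.I)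

/-- The deficiency index `η₋(T) = dim ker (T* + i)`. -/
def etaM (T : H →ₗ.[ℂ] H) : Cardinal := Module.rank ℂ (defSubspace T (-Complex.I))

/-- A partially defined operator is symmetric if `⟪T f, g⟫ = ⟪f, T g⟫` on its domain. -/
def IsSymm (T : H →ₗ.[ℂ] H) : Prop :=
  ∀ f g : T.domain, (inner ℂ (T f) (g : H) : ℂ) = inner ℂ (f : H) (T g)

/-- A densely defined operator is essentially self-adjoint if its closure is self-adjoint. -/
def EssSelfAdj (T : H →ₗ.[ℂ] H) : Prop :=
  T.closure.adjoint = T.closure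

/-- The restriction of the sum of two partially defined operators to the domain
of the first one, assuming domain inclusion. -/
def sumRestrict (S T : H →ₗ.[ℂ] H) (h : S.domain ≤ T.domain) : H →ₗ.[ℂ] H :=
  ⟨S.domain, S.toFun + T.toFun.comp (Submodule.inclusion h)⟩

/-- The sum of a partially defined operator and a bounded operator, with the
domain of the former. -/
def addBdd (S : H →ₗ.[ℂ] H) (B : H →L[ℂ] H) : H →ₗ.[ℂ] H :=
  ⟨S.domain, S.toFun + (B : H →ₗ[ℂ] H).comp S.domain.subtype⟩

end Eta

section Graphs

variable {V : Type*}

/-- The sphere of radius `n` around the vertex `v` (w.r.t. the graph metric). -/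
def sphere (G : SimpleGraph V) (v : V) (n : ℕ) : Set V := {w | G.dist v w = n}

/-- A connected graph is an antitree with root `v` if every vertex `w ≠ v` at distance
`n ≥ 1` from `v` has exactly `S_{n-1}(v) ∪ S_{n+1}(v)` as its set of neighbours. -/
def IsAntitree (G : SimpleGraph V) (v : V) : Prop :=
  G.Connected ∧ ∀ w, w ≠ v →
    G.neighborSet w = sphere G v (G.dist v w - 1) ∪ sphere G v (G.dist v w + 1)

/-- A function is radially symmetric (w.r.t. the root `v`) if it is constant on
each sphere around `v`. -/
def RadSymm (G : SimpleGraph V) (v : V) (f : V → ℂ) : Prop :=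
  ∀ x y, G.dist v x = G.dist v y → f x = f y

/-- The average of `f` over the sphere of radius `n` around `v`. -/
def sphAvg (G : SimpleGraph V) (v : V) (hfin : ∀ n, (sphere G v n).Finite)
    (f : V → ℂ) (n : ℕ) : ℂ :=
  (1 / ((sphere G v n).ncard : ℂ)) * ∑ y ∈ (hfin n).toFinset, f y

/-- The sphere-averaging map `P`. -/
def sphP (G : SimpleGraph V) (v : V) (hfin : ∀ n, (sphere G v n).Finite)
    (f : V → ℂ) (x : V) : ℂ :=
  sphAvg G v hfin f (G.dist v x)

/-- The disjoint union of `n` copies of a graph. -/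
def copies (G : SimpleGraph V) (n : ℕ) : SimpleGraph (Fin n × V) where
  Adj p q := p.1 = q.1 ∧ G.Adj p.2 q.2
  symm := ⟨fun p q h => ⟨h.1.symm, h.2.symm⟩⟩
  loopless := ⟨fun q h => G.loopless.irrefl q.2 h.2⟩

/-- The disjoint union of copies of a locally finite graph is locally finite. -/
def copiesLF (G : SimpleGraph V) (hG : G.LocallyFinite) (n : ℕ) :
    (copies G n).LocallyFinite := fun p =>
  Set.Finite.fintype (by
    haveI := hG p.2
    have hsub : (copies G n).neighborSet p ⊆ (fun w => (p.1, w)) '' (G.neighborSet p.2) := by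
      rintro ⟨i, w⟩ ⟨h1, h2⟩
      exact ⟨w, h2, by simp [h1]⟩
    exact ((G.neighborSet p.2).toFinite.image _).subset hsub)

end Graphs

section MatrixOp

variable {V : Type*}

/-- The pointwise action of a row-finite real matrix. -/
def Lfun (M : V → V → ℝ) (N : V → Finset V) (f : V → ℂ) (x : V) : ℂ :=
  ∑ y ∈ N x, (M x y : ℂ) * f y

variable {M : V → V → ℝ} {N : V → Finset V}

lemma Lfun_support (hMN : ∀ x y, M x y ≠ 0 → y ∈ N x) (hsym : ∀ x y, M x y = M y x)
    {f : V → ℂ} (hf : {x | f x ≠ 0}.Finite) : {x | Lfun M N f x ≠ 0}.Finite := by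
  have hsub : {x | Lfun M N f x ≠ 0} ⊆ ⋃ y ∈ {x | f x ≠ 0}, (N y : Set V) := by
    intro x hx
    obtain ⟨y, hy, hne⟩ := Finset.exists_ne_zero_of_sum_ne_zero hx
    have hfy : f y ≠ 0 := fun h => hne (by simp [h])
    have hMxy : M x y ≠ 0 := fun h => hne (by simp [h])
    exact Set.mem_biUnion hfy (by simpa using hMN y x (by rw [← hsym]; exact hMxy))
  exact (hf.biUnion fun y _ => (N y).finite_toSet).subset hsub

lemma dense_Cc (V : Type*) : Dense ((Cc V : Set (L2 V))) := by
  classical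
  intro f
  have hs : HasSum (fun i => lp.single 2 i (f i)) f := lp.hasSum_single (by norm_num) f
  refine mem_closure_of_tendsto hs (Filter.Eventually.of_forall fun s => ?_)
  refine Submodule.sum_mem _ fun i _ => ?_
  show {x | (lp.single 2 i (f i) : ∀ _ : V, ℂ) x ≠ 0}.Finite
  refine (Set.finite_singleton i).subset fun x hx => ?_
  by_contra hxi
  exact hx (lp.single_apply_ne 2 i _ hxi)

lemma inner_eq_sum (g h : L2 V) (s : Finset V) (hs : ∀ x, (h : ∀ _, ℂ) x ≠ 0 → x ∈ s) :
    (inner ℂ g h : ℂ) = ∑ y ∈ s, conj ((g : ∀ _, ℂ) y) * (h : ∀ _, ℂ) y := by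
  rw [lp.inner_eq_tsum, tsum_eq_sum (s := s) ?_]
  · exact Finset.sum_congr rfl fun y _ => (RCLike.inner_apply _ _).trans (mul_comm _ _)
  · intro x hx
    have hx0 : (h : ∀ _, ℂ) x = 0 := by by_contra hc; exact hx (hs x hc)
    simp [RCLike.inner_apply, hx0]

lemma Lfun_swap (hMN : ∀ x y, M x y ≠ 0 → y ∈ N x) (hsym : ∀ x y, M x y = M y x)
    (g f : V → ℂ) (F A : Finset V)
    (hFf : ∀ y, f y ≠ 0 → y ∈ F) (hNA : ∀ y ∈ F, N y ⊆ A) :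
    ∑ x ∈ A, conj (g x) * Lfun M N f x = ∑ y ∈ F, conj (Lfun M N g y) * f y := by
  classical
  have h1 : ∀ x, Lfun M N f x = ∑ y ∈ F, (M x y : ℂ) * f y := by
    intro x
    have e1 : ∑ y ∈ N x, (M x y : ℂ) * f y = ∑ y ∈ N x ∪ F, (M x y : ℂ) * f y :=
      Finset.sum_subset Finset.subset_union_left (fun y _ hyN => by
        have : M x y = 0 := by by_contra h; exact hyN (hMN x y h)
        simp [this])
    have e2 : ∑ y ∈ F, (M x y : ℂ) * f y = ∑ y ∈ N x ∪ F, (M x y : ℂ) * f y :=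
      Finset.sum_subset Finset.subset_union_right (fun y _ hyF => by
        have : f y = 0 := by by_contra h; exact hyF (hFf y h)
        simp [this])
    rw [Lfun, e1, ← e2]
  calc ∑ x ∈ A, conj (g x) * Lfun M N f x
      = ∑ x ∈ A, ∑ y ∈ F, conj (g x) * ((M x y : ℂ) * f y) := by
        refine Finset.sum_congr rfl fun x _ => ?_
        rw [h1, Finset.mul_sum]
    _ = ∑ y ∈ F, ∑ x ∈ A, conj (g x) * ((M x y : ℂ) * f y) := Finset.sum_comm
    _ = ∑ y ∈ F, conj (Lfun M N g y) * f y := by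
        refine Finset.sum_congr rfl fun y hy => ?_
        have h2 : conj (Lfun M N g y) = ∑ x ∈ A, (M x y : ℂ) * conj (g x) := by
          rw [Lfun, map_sum, Finset.sum_subset (hNA y hy)]
          · exact Finset.sum_congr rfl fun x _ => by
              rw [map_mul, Complex.conj_ofReal, hsym]
          · intro x _ hxN
            have : M y x = 0 := by by_contra h; exact hxN (hMN y x h)
            simp [this]
        rw [h2, Finset.sum_mul]
        exact Finset.sum_congr rfl fun x _ => by ring
end MatrixOp

section AdjChar

variable {V : Type*} [NormedAddCommGroup (L2 V)]

end AdjChar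

section AdjChar2

variable {V : Type*} {M : V → V → ℝ} {N : V → Finset V}
variable {T : L2 V →ₗ.[ℂ] L2 V}

lemma dom_finite (hdom : T.domain = Cc V) (f : T.domain) :
    {x | ((f : L2 V) : ∀ _, ℂ) x ≠ 0}.Finite := by
  have h2 : (f : L2 V) ∈ Cc V := hdom ▸ f.2
  exact h2

lemma inner_Lfun (hMN : ∀ x y, M x y ≠ 0 → y ∈ N x) (hsym : ∀ x y, M x y = M y x)
    (hdom : T.domain = Cc V)
    (hT : ∀ f : T.domain, ∀ x, (T f : ∀ _, ℂ) x = Lfun M N (f : L2 V) x)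
    (g : L2 V) (f : T.domain) (F : Finset V)
    (hF : ∀ y, ((f : L2 V) : ∀ _, ℂ) y ≠ 0 → y ∈ F) :
    (inner ℂ g (T f) : ℂ) = ∑ y ∈ F, conj (Lfun M N g y) * ((f : L2 V) : ∀ _, ℂ) y := by
  classical
  set A := F.biUnion N with hA
  have hTf : ∀ x, (T f : ∀ _, ℂ) x ≠ 0 → x ∈ A := by
    intro x hx
    rw [hT f x] at hx
    obtain ⟨y, hy, hne⟩ := Finset.exists_ne_zero_of_sum_ne_zero hx
    have hfy : ((f : L2 V) : ∀ _, ℂ) y ≠ 0 := fun h => hne (by simp [h])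
    have hMxy : M x y ≠ 0 := fun h => hne (by simp [h])
    exact Finset.mem_biUnion.2 ⟨y, hF y hfy, hMN y x (by rw [← hsym]; exact hMxy)⟩
  rw [inner_eq_sum g (T f) A hTf]
  have : ∀ x ∈ A, conj ((g : ∀ _, ℂ) x) * (T f : ∀ _, ℂ) x
      = conj ((g : ∀ _, ℂ) x) * Lfun M N ((f : L2 V) : ∀ _, ℂ) x := fun x _ => by rw [hT f x]
  rw [Finset.sum_congr rfl this]
  exact Lfun_swap hMN hsym _ _ F A hF (fun y hy => Finset.subset_biUnion_of_mem N hy)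

lemma memAdj (hMN : ∀ x y, M x y ≠ 0 → y ∈ N x) (hsym : ∀ x y, M x y = M y x)
    (hdom : T.domain = Cc V)
    (hT : ∀ f : T.domain, ∀ x, (T f : ∀ _, ℂ) x = Lfun M N (f : L2 V) x)
    (g : L2 V) (hLg : Memℓp (Lfun M N g) 2) : g ∈ T.adjoint.domain := by
  refine LinearPMap.mem_adjoint_domain_of_exists _ ⟨⟨Lfun M N g, hLg⟩, fun f => ?_⟩
  have hfin := dom_finite hdom f
  rw [inner_Lfun hMN hsym hdom hT g f hfin.toFinset (fun y hy => hfin.mem_toFinset.2 hy),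
    inner_eq_sum _ _ hfin.toFinset (fun y hy => hfin.mem_toFinset.2 hy)]

lemma adjoint_apply (hMN : ∀ x y, M x y ≠ 0 → y ∈ N x) (hsym : ∀ x y, M x y = M y x)
    (hdom : T.domain = Cc V)
    (hT : ∀ f : T.domain, ∀ x, (T f : ∀ _, ℂ) x = Lfun M N (f : L2 V) x)
    (g : T.adjoint.domain) (hLg : Memℓp (Lfun M N (g : L2 V)) 2) :
    T.adjoint g = ⟨Lfun M N (g : L2 V), hLg⟩ := by
  refine LinearPMap.adjoint_apply_eq (by rw [hdom]; exact dense_Cc V) _ fun f => ?_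
  have hfin := dom_finite hdom f
  rw [inner_Lfun hMN hsym hdom hT _ f hfin.toFinset (fun y hy => hfin.mem_toFinset.2 hy),
    inner_eq_sum _ _ hfin.toFinset (fun y hy => hfin.mem_toFinset.2 hy)]

lemma single_mem_Cc [DecidableEq V] (x : V) :
    (lp.single 2 x (1 : ℂ) : L2 V) ∈ Cc V := by
  show {j | ((lp.single 2 x (1:ℂ) : L2 V) : ∀ _ : V, ℂ) j ≠ 0}.Finite
  refine (Set.finite_singleton x).subset fun j hj => ?_
  by_contra hji
  exact hj (lp.single_apply_ne 2 x _ hji)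

lemma adjoint_pointwise (hMN : ∀ x y, M x y ≠ 0 → y ∈ N x) (hsym : ∀ x y, M x y = M y x)
    (hdom : T.domain = Cc V)
    (hT : ∀ f : T.domain, ∀ x, (T f : ∀ _, ℂ) x = Lfun M N (f : L2 V) x)
    (g : T.adjoint.domain) (x : V) :
    (T.adjoint g : ∀ _, ℂ) x = Lfun M N (g : L2 V) x := by
  classical
  have hx : lp.single 2 x (1 : ℂ) ∈ T.domain := by rw [hdom]; exact single_mem_Cc x
  set f : T.domain := ⟨lp.single 2 x (1:ℂ), hx⟩ with hf
  have hsupp : ∀ y, ((f : L2 V) : ∀ _, ℂ) y ≠ 0 → y ∈ ({x} : Finset V) := by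
    intro y hy
    by_contra hyx
    exact hy (lp.single_apply_ne 2 x _ (by simpa using hyx))
  have h := LinearPMap.adjoint_isFormalAdjoint (T := T) (by rw [hdom]; exact dense_Cc V) g f
  rw [inner_eq_sum _ _ ({x} : Finset V) hsupp,
    inner_Lfun hMN hsym hdom hT _ f ({x} : Finset V) hsupp] at h
  simp only [Finset.sum_singleton] at h
  have h1 : ((f : L2 V) : ∀ _, ℂ) x = 1 := lp.single_apply_self 2 x 1
  rw [h1, mul_one, mul_one] at h
  exact star_injective.eq_iff.1 h

/-- The eispace-style submodule `{g | L g = z g}` pointwise. -/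
def Ksub (M : V → V → ℝ) (N : V → Finset V) (z : ℂ) : Submodule ℂ (L2 V) where
  carrier := {g | ∀ x, Lfun M N (g : ∀ _, ℂ) x = z * (g : ∀ _, ℂ) x}
  zero_mem' := by intro x; simp [Lfun]
  add_mem' := by
    intro f g hf hg x
    simp only [lp.coeFn_add, Pi.add_apply]
    have : Lfun M N ((f : ∀ _, ℂ) + (g : ∀ _, ℂ)) x
        = Lfun M N (f : ∀ _, ℂ) x + Lfun M N (g : ∀ _, ℂ) x := by
      simp [Lfun, mul_add, Finset.sum_add_distrib]
    rw [this, hf x, hg x]; ring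
  smul_mem' := by
    intro c f hf x
    have hc : ((c • f : L2 V) : ∀ _, ℂ) = fun y => c * (f : ∀ _, ℂ) y := by
      funext y; simp [lp.coeFn_smul]
    have hL : Lfun M N (fun y => c * (f : ∀ _, ℂ) y) x = c * Lfun M N (f : ∀ _, ℂ) x := by
      simp only [Lfun, Finset.mul_sum]
      exact Finset.sum_congr rfl fun y _ => by ring
    simp only [hc, hL, hf x]
    ring

lemma mem_Ksub_iff {z : ℂ} {g : L2 V} :
    g ∈ Ksub M N z ↔ ∀ x, Lfun M N (g : ∀ _, ℂ) x = z * (g : ∀ _, ℂ) x := Iff.rfl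

lemma rank_defSubspace (hMN : ∀ x y, M x y ≠ 0 → y ∈ N x) (hsym : ∀ x y, M x y = M y x)
    (hdom : T.domain = Cc V)
    (hT : ∀ f : T.domain, ∀ x, (T f : ∀ _, ℂ) x = Lfun M N (f : L2 V) x)
    (z : ℂ) :
    Module.rank ℂ (defSubspace T z) = Module.rank ℂ (Ksub M N z) := by
  have key : ∀ g : T.adjoint.domain,
      g ∈ defSubspace T z ↔ ∀ x, Lfun M N ((g : L2 V) : ∀ _, ℂ) x = z * ((g : L2 V) : ∀ _, ℂ) x := by
    intro g
    constructor
    · intro hg x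
      have h0 : T.adjoint.toFun g - z • (g : L2 V) = 0 := by
        simpa [defSubspace, LinearMap.sub_apply] using hg
      have h1 : T.adjoint g = z • (g : L2 V) := by
        rw [sub_eq_zero] at h0; exact h0
      rw [← adjoint_pointwise hMN hsym hdom hT g x, h1]
      simp [lp.coeFn_smul]
    · intro hg
      have hLg : Memℓp (Lfun M N (g : L2 V)) 2 := by
        have : Lfun M N ((g : L2 V) : ∀ _, ℂ) = ⇑(z • (g : L2 V)) := by
          funext x; rw [hg x]; simp [lp.coeFn_smul]
        rw [this]; exact lp.memℓp _
      have h1 : T.adjoint g = z • (g : L2 V) := by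
        rw [adjoint_apply hMN hsym hdom hT g hLg]
        apply lp.ext
        funext x
        simpa [lp.coeFn_smul] using hg x
      show T.adjoint.toFun g - z • (g : L2 V) = 0
      rw [sub_eq_zero]; exact h1
  -- the linear map from the deficiency space to Ksub
  let φ : defSubspace T z →ₗ[ℂ] Ksub M N z :=
    { toFun := fun g => ⟨(g : T.adjoint.domain), (key _).1 g.2⟩
      map_add' := fun g h => rfl
      map_smul' := fun c g => rfl }
  have hbij : Function.Bijective φ := by
    constructor
    · intro g h hgh
      have h2 : ((g : T.adjoint.domain) : L2 V) = ((h : T.adjoint.domain) : L2 V) :=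
        congrArg (fun u : Ksub M N z => (u : L2 V)) hgh
      exact Subtype.ext (Subtype.ext h2)
    · rintro ⟨g, hg⟩
      have hLg : Memℓp (Lfun M N g) 2 := by
        have : Lfun M N (g : ∀ _, ℂ) = ⇑(z • g) := by
          funext x; rw [hg x]; simp [lp.coeFn_smul]
        rw [this]; exact lp.memℓp _
      have hmem : g ∈ T.adjoint.domain := memAdj hMN hsym hdom hT g hLg
      exact ⟨⟨⟨g, hmem⟩, (key ⟨g, hmem⟩).2 hg⟩, rfl⟩
  exact (LinearEquiv.ofBijective φ hbij).rank_eq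
end AdjChar2

section Inst

variable {V : Type*} (G : SimpleGraph V) (hG : G.LocallyFinite)

open scoped Classical in
/-- Adjacency matrix. -/
def MA : V → V → ℝ := fun x y => if G.Adj x y then 1 else 0

/-- Neighbour finsets. -/
def NA : V → Finset V := fun x => @SimpleGraph.neighborFinset V G x (hG x)

lemma MA_mem : ∀ x y, MA G x y ≠ 0 → y ∈ NA G hG x := by
  classical
  intro x y h
  by_cases hadj : G.Adj x y
  · exact (@SimpleGraph.mem_neighborFinset V G x (hG x) y).2 hadj
  · simp [MA, hadj] at h

lemma MA_symm : ∀ x y, MA G x y = MA G y x := fun x y => by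
  classical
  unfold MA
  rw [SimpleGraph.adj_comm]

lemma Lfun_MA (f : V → ℂ) (x : V) : Lfun (MA G) (NA G hG) f x = adjA G hG f x := by
  unfold Lfun adjA NA
  refine Finset.sum_congr rfl fun y hy => ?_
  have hadj : G.Adj x y := (@SimpleGraph.mem_neighborFinset V G x (hG x) y).1 hy
  simp [MA, hadj]

lemma adjOp_domain : (adjOp G hG).domain = Cc V := rfl

lemma adjOp_apply (f : (adjOp G hG).domain) (x : V) :
    (adjOp G hG f : ∀ _, ℂ) x = Lfun (MA G) (NA G hG) ((f : L2 V) : ∀ _, ℂ) x := by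
  rw [Lfun_MA]; rfl

end Inst

section InstJ

variable (a b : ℕ → ℝ)

/-- Jacobi matrix entries. -/
def MJ : ℕ → ℕ → ℝ := fun n m =>
  (if m = n + 1 then a n else 0) + (if n = m + 1 then a m else 0) + (if n = m then b n else 0)

/-- Jacobi neighbourhoods. -/
def NJ : ℕ → Finset ℕ := fun n => {n - 1, n, n + 1}

lemma MJ_mem : ∀ n m, MJ a b n m ≠ 0 → m ∈ NJ n := by
  intro n m h
  unfold NJ
  simp only [Finset.mem_insert, Finset.mem_singleton]
  by_contra hc
  push_neg at hc
  obtain ⟨h1, h2, h3⟩ := hc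
  apply h
  unfold MJ
  rw [if_neg (by omega), if_neg (by omega), if_neg (by omega)]
  simp

lemma MJ_symm : ∀ n m, MJ a b n m = MJ a b m n := by
  intro n m
  unfold MJ
  have hC : (if n = m then b n else 0) = (if m = n then b m else 0) := by
    rcases eq_or_ne n m with h | h
    · subst h; simp
    · rw [if_neg h, if_neg (Ne.symm h)]
  rw [hC]; ring

lemma Lfun_MJ (f : ℕ → ℂ) (n : ℕ) : Lfun (MJ a b) NJ f n = jacA a b f n := by
  rcases n with _ | k
  · show ∑ y ∈ ({0 - 1, 0, 0 + 1} : Finset ℕ), (MJ a b 0 y : ℂ) * f y = _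
    have h01 : ({0 - 1, 0, 0 + 1} : Finset ℕ) = {0, 1} := by decide
    rw [h01, Finset.sum_insert (by decide), Finset.sum_singleton]
    have e0 : MJ a b 0 0 = b 0 := by unfold MJ; norm_num
    have e1 : MJ a b 0 1 = a 0 := by unfold MJ; norm_num
    rw [e0, e1]
    show _ = (if (0:ℕ) = 0 then 0 else _) + (b 0 : ℂ) * f 0 + (a 0 : ℂ) * f 1
    rw [if_pos rfl]
    ring
  · show ∑ y ∈ ({k + 1 - 1, k + 1, k + 1 + 1} : Finset ℕ), (MJ a b (k+1) y : ℂ) * f y = _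
    have hk : k + 1 - 1 = k := rfl
    rw [hk, Finset.sum_insert (by simp; omega), Finset.sum_insert (by simp),
      Finset.sum_singleton]
    have c1 : ¬(k = k + 1 + 1) := by omega
    have c2 : (k + 1 = k + 1) := rfl
    have c3 : ¬(k + 1 = k) := by omega
    have c4 : ¬(k + 1 = k + 1 + 1) := by omega
    have c5 : ¬(k + 1 = k + 1 + 1 + 1) := by omega
    have c6 : ¬(k + 1 = k + 2) := by omega
    have c7 : (k + 2 = k + 1 + 1) := rfl
    have c8 : ¬(k + 1 = k + 2 + 1) := by omega
    have e0 : MJ a b (k+1) k = a k := by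
      unfold MJ; rw [if_neg c1, if_pos c2, if_neg c3]; ring
    have e1 : MJ a b (k+1) (k+1) = b (k+1) := by
      unfold MJ; rw [if_neg c4, if_pos rfl]; ring
    have e2 : MJ a b (k+1) (k+2) = a (k+1) := by
      unfold MJ; rw [if_pos c7, if_neg c8, if_neg c6]; ring
    rw [e0, e1, e2]
    show _ = (if k + 1 = 0 then 0 else (a (k + 1 - 1) : ℂ) * f (k + 1 - 1)) +
      (b (k+1) : ℂ) * f (k+1) + (a (k+1) : ℂ) * f (k+1+1)
    rw [if_neg (by omega), hk]
    ring

lemma jacOp_domain : (jacOp a b).domain = Cc ℕ := rfl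

lemma jacOp_apply (f : (jacOp a b).domain) (n : ℕ) :
    (jacOp a b f : ∀ _, ℂ) n = Lfun (MJ a b) NJ ((f : L2 ℕ) : ∀ _, ℂ) n := by
  rw [Lfun_MJ]; rfl

end InstJ

section Geo
variable {V : Type*} {G : SimpleGraph V} {v : V}

lemma mem_sphere_iff {x : V} {n : ℕ} : x ∈ sphere G v n ↔ G.dist v x = n := Iff.rfl

lemma sphere_zero (hconn : G.Connected) : sphere G v 0 = {v} := by
  ext w
  rw [mem_sphere_iff, Set.mem_singleton_iff, hconn.dist_eq_zero_iff]
  exact eq_comm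

lemma exists_pred (hconn : G.Connected) {x : V} {n : ℕ} (hx : G.dist v x = n + 1) :
    ∃ y, G.Adj y x ∧ G.dist v y = n := by
  obtain ⟨p, hp⟩ := hconn.exists_walk_length_eq_dist v x
  have hvx : x ≠ v := by
    intro h; subst h; rw [SimpleGraph.dist_self] at hx; omega
  obtain ⟨y, hadj, q, hq⟩ := SimpleGraph.Walk.exists_eq_cons_of_ne hvx p.reverse
  have hql : q.length = n := by
    have h := congrArg SimpleGraph.Walk.length hq
    rw [SimpleGraph.Walk.length_reverse, hp, hx, SimpleGraph.Walk.length_cons] at h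
    omega
  have h1 : G.dist v y ≤ n := by
    have h := SimpleGraph.dist_le q.reverse
    rwa [SimpleGraph.Walk.length_reverse, hql] at h
  have h2 : n ≤ G.dist v y := by
    have ht := hconn.dist_triangle (u := v) (v := y) (w := x)
    have hyx : G.dist y x ≤ 1 := by
      have h := SimpleGraph.dist_le (SimpleGraph.Walk.cons hadj.symm SimpleGraph.Walk.nil)
      simpa using h
    rw [hx] at ht
    omega
  exact ⟨y, hadj.symm, le_antisymm h1 h2⟩

lemma sphere_finite (hG : G.LocallyFinite) (hconn : G.Connected) :
    ∀ n, (sphere G v n : Set V).Finite := by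
  intro n
  induction n with
  | zero => rw [sphere_zero hconn]; exact Set.finite_singleton v
  | succ k ih =>
    have hsub : sphere G v (k+1) ⊆ ⋃ y ∈ sphere G v k, (G.neighborSet y) := by
      intro x hx
      obtain ⟨y, hadj, hy⟩ := exists_pred hconn hx
      exact Set.mem_biUnion hy hadj
    refine (ih.biUnion fun y _ => ?_).subset hsub
    haveI := hG y
    exact (G.neighborSet y).toFinite

lemma v_mem_sphere_iff {m : ℕ} : v ∈ sphere G v m ↔ m = 0 := by
  rw [mem_sphere_iff, SimpleGraph.dist_self]
  exact eq_comm

lemma neighborSet_v (hAT : IsAntitree G v) : G.neighborSet v = sphere G v 1 := by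
  ext w
  constructor
  · intro hw
    have hne : w ≠ v := fun h => G.loopless.irrefl v (h ▸ hw)
    have h2 : v ∈ G.neighborSet w := hw.symm
    rw [hAT.2 w hne] at h2
    have hdpos : 0 < G.dist v w := hAT.1.pos_dist_of_ne (Ne.symm hne)
    rcases h2 with h | h
    · have hd0 := v_mem_sphere_iff.1 h
      rw [mem_sphere_iff]
      omega
    · have hd0 := v_mem_sphere_iff.1 h
      omega
  · intro hw
    have hd : G.dist v w = 1 := hw
    exact SimpleGraph.dist_eq_one_iff_adj.1 hd

lemma sphere_disjoint {m n : ℕ} (h : m ≠ n) :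
    Disjoint (sphere G v m) (sphere G v n) := by
  rw [Set.disjoint_left]
  intro x hx hx'
  exact h (hx.symm.trans hx')

lemma adjA_eq_spheres (hG : G.LocallyFinite) (hAT : IsAntitree G v)
    (hfin : ∀ n, (sphere G v n : Set V).Finite) (g : V → ℂ) {x : V} (hx : x ≠ v) :
    adjA G hG g x = (∑ y ∈ (hfin (G.dist v x - 1)).toFinset, g y)
      + ∑ y ∈ (hfin (G.dist v x + 1)).toFinset, g y := by
  classical
  have hnb : @SimpleGraph.neighborFinset V G x (hG x)
      = (hfin (G.dist v x - 1)).toFinset ∪ (hfin (G.dist v x + 1)).toFinset := by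
    apply Finset.coe_injective
    rw [Finset.coe_union, Set.Finite.coe_toFinset, Set.Finite.coe_toFinset,
      SimpleGraph.neighborFinset_def, Set.coe_toFinset]
    exact hAT.2 x hx
  have hdpos : 0 < G.dist v x := hAT.1.pos_dist_of_ne (Ne.symm hx)
  have hdisj : Disjoint ((hfin (G.dist v x - 1)).toFinset)
      ((hfin (G.dist v x + 1)).toFinset) := by
    rw [Finset.disjoint_left]
    intro y hy hy'
    rw [Set.Finite.mem_toFinset] at hy hy'
    have := hy.symm.trans hy'
    omega
  rw [adjA, hnb, Finset.sum_union hdisj]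

lemma adjA_v_eq (hG : G.LocallyFinite) (hAT : IsAntitree G v)
    (hfin : ∀ n, (sphere G v n : Set V).Finite) (g : V → ℂ) :
    adjA G hG g v = ∑ y ∈ (hfin 1).toFinset, g y := by
  classical
  have hnb : @SimpleGraph.neighborFinset V G v (hG v) = (hfin 1).toFinset := by
    apply Finset.coe_injective
    rw [Set.Finite.coe_toFinset, SimpleGraph.neighborFinset_def, Set.coe_toFinset]
    exact neighborSet_v hAT
  rw [adjA, hnb]

end Geo

section ATEquiv

variable {V : Type*} {G : SimpleGraph V} {v : V}

lemma memℓp_two_iff {ι : Type*} (f : ι → ℂ) :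
    Memℓp f 2 ↔ Summable (fun i => ‖f i‖ ^ (2:ℕ)) := by
  rw [memℓp_gen_iff (p := (2 : ENNReal)) (by norm_num)]
  apply summable_congr
  intro i
  have h2 : ((2 : ENNReal).toReal) = ((2:ℕ) : ℝ) := by norm_num
  rw [h2, Real.rpow_natCast]

lemma tsum_fiber (hfin : ∀ n, (sphere G v n : Set V).Finite) (F : V → ℝ) (n : ℕ) :
    ∑' (x : {x : V // G.dist v x = n}), F x.1 = ∑ y ∈ (hfin n).toFinset, F y := by
  classical
  haveI : Fintype {x : V // G.dist v x = n} := (hfin n).fintype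
  rw [tsum_fintype]
  rw [← Finset.sum_coe_sort ((hfin n).toFinset) F]
  refine Fintype.sum_equiv (Equiv.subtypeEquivRight fun x => ?_) _ _ fun x => rfl
  rw [Set.Finite.mem_toFinset]
  exact Iff.rfl

lemma radial_of_eigen (hG : G.LocallyFinite) (hAT : IsAntitree G v)
    (hfin : ∀ n, (sphere G v n : Set V).Finite)
    {z : ℂ} (hz : z ≠ 0) (g : V → ℂ) (hg : ∀ x, adjA G hG g x = z * g x) :
    ∀ x y, G.dist v x = G.dist v y → g x = g y := by
  intro x y hxy
  by_cases hx : x = v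
  · have h0 : G.dist v y = 0 := by rw [← hxy, hx, SimpleGraph.dist_self]
    have hy : y = v := (hAT.1.dist_eq_zero_iff.1 h0).symm
    rw [hx, hy]
  · have hy : y ≠ v := by
      intro h; subst h
      rw [SimpleGraph.dist_self] at hxy
      exact hx ((hAT.1.dist_eq_zero_iff.1 hxy).symm)
    have e1 := (hg x).symm.trans ((adjA_eq_spheres hG hAT hfin g hx).trans (by rw [hxy]))
    have e2 := (hg y).symm.trans (adjA_eq_spheres hG hAT hfin g hy)
    exact mul_left_cancel₀ hz (e1.trans e2.symm)

lemma sum_sphere_eq (hfin : ∀ n, (sphere G v n : Set V).Finite) (g : V → ℂ)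
    (hrad : ∀ x y, G.dist v x = G.dist v y → g x = g y) {n : ℕ} {x : V}
    (hx : G.dist v x = n) :
    ∑ y ∈ (hfin n).toFinset, g y = ((sphere G v n).ncard : ℂ) * g x := by
  have h1 : ∀ y ∈ (hfin n).toFinset, g y = g x := by
    intro y hy
    rw [Set.Finite.mem_toFinset] at hy
    exact hrad y x (hy.trans hx.symm)
  rw [Finset.sum_congr rfl h1, Finset.sum_const, Set.ncard_eq_toFinset_card _ (hfin n)]
  simp [nsmul_eq_mul]
  
end ATEquiv

section Corr

variable {V : Type*} (G : SimpleGraph V) (v : V)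

/-- `√ s_n` as a complex number. -/
def SQ (n : ℕ) : ℂ := ((Real.sqrt ((sphere G v n).ncard) : ℝ) : ℂ)

/-- The radial map `ℓ²(V) → ℓ²(ℕ)` (on raw functions). -/
def PhiF (hfin : ∀ n, (sphere G v n : Set V).Finite) (g : V → ℂ) (n : ℕ) : ℂ :=
  (SQ G v n)⁻¹ * ∑ y ∈ (hfin n).toFinset, g y

/-- The radial map `ℓ²(ℕ) → ℓ²(V)` (on raw functions). -/
def PsiF (f : ℕ → ℂ) (x : V) : ℂ := (SQ G v (G.dist v x))⁻¹ * f (G.dist v x)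

variable {G v}

lemma SQ_sq (n : ℕ) : SQ G v n * SQ G v n = (((sphere G v n).ncard : ℕ) : ℂ) := by
  rw [SQ, ← Complex.ofReal_mul, Real.mul_self_sqrt (Nat.cast_nonneg _)]
  norm_cast

lemma SQ_ne (n : ℕ) (h : (sphere G v n).ncard ≠ 0) : SQ G v n ≠ 0 := by
  rw [SQ]
  simp only [ne_eq, Complex.ofReal_eq_zero]
  intro hc
  exact h (by exact_mod_cast (Real.sqrt_eq_zero (Nat.cast_nonneg _)).1 hc)

lemma SQ_zero (n : ℕ) (h : (sphere G v n).ncard = 0) : SQ G v n = 0 := by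
  rw [SQ, h]
  simp

lemma ncard_sphere_zero (hconn : G.Connected) : (sphere G v 0).ncard = 1 := by
  rw [sphere_zero hconn, Set.ncard_singleton]

lemma SQ_0 (hconn : G.Connected) : SQ G v 0 = 1 := by
  rw [SQ, ncard_sphere_zero hconn]
  simp

lemma aC (a : ℕ → ℝ)
    (ha : ∀ n, a n = Real.sqrt
      (((sphere G v n).ncard : ℝ) * ((sphere G v (n + 1)).ncard : ℝ))) (n : ℕ) :
    ((a n : ℝ) : ℂ) = SQ G v n * SQ G v (n + 1) := by
  rw [ha n, Real.sqrt_mul (Nat.cast_nonneg _), SQ, SQ, Complex.ofReal_mul]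

lemma toFinset_card_eq (hfin : ∀ n, (sphere G v n : Set V).Finite) (n : ℕ) :
    (hfin n).toFinset.card = (sphere G v n).ncard :=
  (Set.ncard_eq_toFinset_card _ (hfin n)).symm

lemma sum_empty_sphere {E : Type*} [AddCommMonoid E]
    (hfin : ∀ n, (sphere G v n : Set V).Finite) (g : V → E) {n : ℕ}
    (h : (sphere G v n).ncard = 0) : ∑ y ∈ (hfin n).toFinset, g y = 0 := by
  have he : (hfin n).toFinset = ∅ := by
    rw [← Finset.card_eq_zero, toFinset_card_eq hfin n]
    exact h
  rw [he, Finset.sum_empty]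

lemma ncard_ne_zero_of_dist (hfin : ∀ n, (sphere G v n : Set V).Finite) {x : V} {n : ℕ}
    (hx : G.dist v x = n) : (sphere G v n).ncard ≠ 0 := by
  rw [← toFinset_card_eq hfin n]
  exact Finset.card_ne_zero_of_mem ((hfin n).mem_toFinset.2 hx)

lemma exists_dist_eq (hfin : ∀ n, (sphere G v n : Set V).Finite) {n : ℕ}
    (hn : (sphere G v n).ncard ≠ 0) : ∃ x, G.dist v x = n := by
  have hc : (hfin n).toFinset.card ≠ 0 := by rw [toFinset_card_eq hfin n]; exact hn
  obtain ⟨x, hxm⟩ := Finset.card_pos.1 (Nat.pos_of_ne_zero hc)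
  exact ⟨x, (hfin n).mem_toFinset.1 hxm⟩

lemma toFinset_sphere_zero (hconn : G.Connected)
    (hfin : ∀ n, (sphere G v n : Set V).Finite) : (hfin 0).toFinset = {v} := by
  ext w
  rw [Set.Finite.mem_toFinset, sphere_zero hconn, Set.mem_singleton_iff,
    Finset.mem_singleton]

lemma SQ_mul_PhiF (hfin : ∀ n, (sphere G v n : Set V).Finite) (g : V → ℂ) (m : ℕ) :
    SQ G v m * PhiF G v hfin g m = ∑ y ∈ (hfin m).toFinset, g y := by
  by_cases hm : (sphere G v m).ncard = 0
  · rw [SQ_zero m hm, sum_empty_sphere hfin g hm, zero_mul]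
  · rw [PhiF, ← mul_assoc, mul_inv_cancel₀ (SQ_ne m hm), one_mul]

lemma phi_jac (hG : G.LocallyFinite) (hAT : IsAntitree G v)
    (hfin : ∀ n, (sphere G v n : Set V).Finite)
    (a : ℕ → ℝ)
    (ha : ∀ n, a n = Real.sqrt
      (((sphere G v n).ncard : ℝ) * ((sphere G v (n + 1)).ncard : ℝ)))
    {z : ℂ} (hz : z ≠ 0)
    (g : V → ℂ) (hg : ∀ x, adjA G hG g x = z * g x) (n : ℕ) :
    jacA a (fun _ => 0) (PhiF G v hfin g) n = z * PhiF G v hfin g n := by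
  have hconn := hAT.1
  have hrad := radial_of_eigen hG hAT hfin hz g hg
  rcases n with _ | k
  · simp only [jacA, if_pos rfl, Complex.ofReal_zero, zero_mul, add_zero, zero_add]
    have e1 : (a 0 : ℂ) * PhiF G v hfin g 1 = ∑ y ∈ (hfin 1).toFinset, g y := by
      rw [aC a ha 0, mul_assoc, SQ_mul_PhiF hfin g 1, SQ_0 hconn, one_mul]
    have e2 : z * PhiF G v hfin g 0 = ∑ y ∈ (hfin 1).toFinset, g y := by
      rw [PhiF, SQ_0 hconn, inv_one, one_mul, toFinset_sphere_zero hconn hfin,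
        Finset.sum_singleton, ← hg v, adjA_v_eq hG hAT hfin g]
    rw [e1, e2]
    simp
  · simp only [jacA, if_neg (Nat.succ_ne_zero k), Complex.ofReal_zero, zero_mul,
      add_zero, zero_add, Nat.add_sub_cancel]
    by_cases hk1 : (sphere G v (k+1)).ncard = 0
    · have hR : PhiF G v hfin g (k+1) = 0 := by
        rw [PhiF, sum_empty_sphere hfin g hk1, mul_zero]
      rw [hR, aC a ha k, aC a ha (k+1), SQ_zero (k+1) hk1]
      ring
    · obtain ⟨x, hx⟩ := exists_dist_eq hfin hk1
      have hxv : x ≠ v := by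
        intro h
        rw [h, SimpleGraph.dist_self] at hx
        omega
      have hA : (∑ y ∈ (hfin k).toFinset, g y) + ∑ y ∈ (hfin (k+1+1)).toFinset, g y
          = z * g x := by
        have h0 := (adjA_eq_spheres hG hAT hfin g hxv).symm.trans (hg x)
        rw [hx] at h0
        simpa [Nat.add_sub_cancel] using h0
      have hσ : ∑ y ∈ (hfin (k+1)).toFinset, g y
          = (((sphere G v (k+1)).ncard : ℕ) : ℂ) * g x := sum_sphere_eq hfin g hrad hx
      have hSne1 := SQ_ne (k+1) hk1
      have hφ : z * PhiF G v hfin g (k+1)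
          = z * ((SQ G v (k+1))⁻¹ * (SQ G v (k+1) * SQ G v (k+1) * g x)) := by
        rw [PhiF, hσ, ← SQ_sq (k+1)]
      rw [aC a ha k, aC a ha (k+1), hφ,
        show SQ G v k * SQ G v (k+1) * PhiF G v hfin g k
          = SQ G v (k+1) * (SQ G v k * PhiF G v hfin g k) from by ring,
        show SQ G v (k+1) * SQ G v (k+1+1) * PhiF G v hfin g (k+1+1)
          = SQ G v (k+1) * (SQ G v (k+1+1) * PhiF G v hfin g (k+1+1)) from by ring,
        SQ_mul_PhiF hfin g k, SQ_mul_PhiF hfin g (k+1+1), ← mul_add, hA]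
      field_simp

lemma phi_memlp (hG : G.LocallyFinite) (hAT : IsAntitree G v)
    (hfin : ∀ n, (sphere G v n : Set V).Finite)
    {z : ℂ} (hz : z ≠ 0)
    (g : L2 V) (hg : ∀ x, adjA G hG (g : ∀ _, ℂ) x = z * (g : ∀ _, ℂ) x) :
    Memℓp (PhiF G v hfin (g : ∀ _, ℂ)) 2 := by
  have hrad := radial_of_eigen hG hAT hfin hz _ hg
  have hgsum : Summable (fun x : V => ‖(g : ∀ _, ℂ) x‖ ^ (2:ℕ)) :=
    (memℓp_two_iff _).1 (lp.memℓp g)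
  have hsig : Summable
      (fun p : (Σ n : ℕ, {x : V // G.dist v x = n}) => ‖(g : ∀ _, ℂ) p.2.1‖ ^ (2:ℕ)) :=
    ((Equiv.sigmaFiberEquiv (fun x : V => G.dist v x)).summable_iff).2 hgsum
  haveI : ∀ n, Fintype {x : V // G.dist v x = n} := fun n => (hfin n).fintype
  have hfib : Summable
      (fun n : ℕ => ∑' (x : {x : V // G.dist v x = n}), ‖(g : ∀ _, ℂ) x.1‖ ^ (2:ℕ)) :=
    hsig.sigma
  refine (memℓp_two_iff _).2 (hfib.congr fun n => ?_)
  show (∑' (x : {x : V // G.dist v x = n}), ‖(g : ∀ _, ℂ) x.1‖ ^ (2:ℕ)) = _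
  rw [tsum_fiber hfin (fun y => ‖(g : ∀ _, ℂ) y‖ ^ (2:ℕ)) n]
  by_cases hn : (sphere G v n).ncard = 0
  · rw [sum_empty_sphere hfin _ hn, PhiF, sum_empty_sphere hfin _ hn, mul_zero]
    simp
  · obtain ⟨x, hx⟩ := exists_dist_eq hfin hn
    have hconst : ∀ y ∈ (hfin n).toFinset, ‖(g : ∀ _, ℂ) y‖ ^ (2:ℕ)
        = ‖(g : ∀ _, ℂ) x‖ ^ (2:ℕ) := fun y hy => by
      rw [hrad y x (((hfin n).mem_toFinset.1 hy).trans hx.symm)]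
    rw [Finset.sum_congr rfl hconst, Finset.sum_const, toFinset_card_eq hfin n]
    have hφ : PhiF G v hfin (g : ∀ _, ℂ) n
        = (SQ G v n)⁻¹ * ((((sphere G v n).ncard : ℕ) : ℂ) * (g : ∀ _, ℂ) x) := by
      rw [PhiF, sum_sphere_eq hfin _ hrad hx]
    rw [hφ, norm_mul, norm_inv, norm_mul]
    have h1 : ‖SQ G v n‖ = Real.sqrt ((sphere G v n).ncard) := by
      rw [SQ, Complex.norm_real, Real.norm_of_nonneg (Real.sqrt_nonneg _)]
    have h2 : ‖(((sphere G v n).ncard : ℕ) : ℂ)‖ = ((sphere G v n).ncard : ℝ) :=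
      Complex.norm_natCast _
    have h3 : (0:ℝ) < ((sphere G v n).ncard : ℝ) :=
      Nat.cast_pos.2 (Nat.pos_of_ne_zero hn)
    rw [h1, h2, mul_pow, mul_pow, inv_pow, Real.sq_sqrt h3.le, nsmul_eq_mul]
    field_simp

end Corr

section Corr2

variable {V : Type*} {G : SimpleGraph V} {v : V}

lemma psi_J0 (hconn : G.Connected)
    (a : ℕ → ℝ)
    (ha : ∀ n, a n = Real.sqrt
      (((sphere G v n).ncard : ℝ) * ((sphere G v (n + 1)).ncard : ℝ)))
    {z : ℂ} (hz : z ≠ 0)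
    (f : ℕ → ℂ) (hf : ∀ n, jacA a (fun _ => 0) f n = z * f n)
    {n : ℕ} (hn : (sphere G v n).ncard = 0) : f n = 0 := by
  rcases n with _ | k
  · rw [ncard_sphere_zero (v := v) hconn] at hn
    exact absurd hn one_ne_zero
  · have h := hf (k+1)
    simp only [jacA, if_neg (Nat.succ_ne_zero k), Complex.ofReal_zero, zero_mul,
      add_zero, zero_add, Nat.add_sub_cancel] at h
    rw [aC a ha k, aC a ha (k+1), SQ_zero (k+1) hn] at h
    have h0 : z * f (k+1) = 0 := by rw [← h]; ring
    exact (mul_eq_zero.1 h0).resolve_left hz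

lemma sum_psi (hfin : ∀ n, (sphere G v n : Set V).Finite) (f : ℕ → ℂ) (m : ℕ) :
    ∑ y ∈ (hfin m).toFinset, PsiF G v f y = SQ G v m * f m := by
  by_cases hm : (sphere G v m).ncard = 0
  · rw [sum_empty_sphere hfin _ hm, SQ_zero m hm, zero_mul]
  · have hconst : ∀ y ∈ (hfin m).toFinset, PsiF G v f y = (SQ G v m)⁻¹ * f m := by
      intro y hy
      have hd : G.dist v y = m := (hfin m).mem_toFinset.1 hy
      rw [PsiF, hd]
    rw [Finset.sum_congr rfl hconst, Finset.sum_const, toFinset_card_eq hfin m,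
      nsmul_eq_mul, ← SQ_sq m]
    field_simp [SQ_ne m hm]

lemma psi_adj (hG : G.LocallyFinite) (hAT : IsAntitree G v)
    (hfin : ∀ n, (sphere G v n : Set V).Finite)
    (a : ℕ → ℝ)
    (ha : ∀ n, a n = Real.sqrt
      (((sphere G v n).ncard : ℝ) * ((sphere G v (n + 1)).ncard : ℝ)))
    {z : ℂ} (hz : z ≠ 0)
    (f : ℕ → ℂ) (hf : ∀ n, jacA a (fun _ => 0) f n = z * f n) (x : V) :
    adjA G hG (PsiF G v f) x = z * PsiF G v f x := by
  have hconn := hAT.1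
  by_cases hx : x = v
  · have hL : adjA G hG (PsiF G v f) v = SQ G v 1 * f 1 := by
      rw [adjA_v_eq hG hAT hfin, sum_psi hfin f 1]
    have h0 := hf 0
    simp only [jacA, eq_self_iff_true, if_true, Complex.ofReal_zero, zero_mul,
      add_zero, zero_add] at h0
    rw [aC a ha 0, SQ_0 hconn, one_mul] at h0
    have hR : z * PsiF G v f v = z * f 0 := by
      rw [PsiF, SimpleGraph.dist_self, SQ_0 hconn, inv_one, one_mul]
    rw [hx, hL, hR]
    exact h0
  · have hd : G.dist v x ≠ 0 := by
      intro h
      exact hx ((hconn.dist_eq_zero_iff.1 h).symm)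
    obtain ⟨k, hk⟩ := Nat.exists_eq_succ_of_ne_zero hd
    have hs1 : (sphere G v (k+1)).ncard ≠ 0 := ncard_ne_zero_of_dist hfin hk
    have hL : adjA G hG (PsiF G v f) x
        = SQ G v k * f k + SQ G v (k+1+1) * f (k+1+1) := by
      rw [adjA_eq_spheres hG hAT hfin _ hx, hk]
      rw [sum_psi hfin f k, sum_psi hfin f (k+1+1)]
    have h0 := hf (k+1)
    simp only [jacA, if_neg (Nat.succ_ne_zero k), Complex.ofReal_zero, zero_mul,
      add_zero, zero_add, Nat.add_sub_cancel] at h0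
    rw [aC a ha k, aC a ha (k+1)] at h0
    have hR : z * PsiF G v f x = (SQ G v (k+1))⁻¹ * (z * f (k+1)) := by
      rw [PsiF, hk]; ring
    rw [hL, hR, ← h0]
    field_simp [SQ_ne (k+1) hs1]

lemma psi_memlp (hconn : G.Connected)
    (hfin : ∀ n, (sphere G v n : Set V).Finite)
    (a : ℕ → ℝ)
    (ha : ∀ n, a n = Real.sqrt
      (((sphere G v n).ncard : ℝ) * ((sphere G v (n + 1)).ncard : ℝ)))
    {z : ℂ} (hz : z ≠ 0)
    (f : L2 ℕ) (hf : ∀ n, jacA a (fun _ => 0) (f : ∀ _, ℂ) n = z * (f : ∀ _, ℂ) n) :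
    Memℓp (PsiF G v (f : ∀ _, ℂ)) 2 := by
  haveI : ∀ n, Fintype {x : V // G.dist v x = n} := fun n => (hfin n).fintype
  have hfsum : Summable (fun n => ‖(f : ∀ _, ℂ) n‖ ^ (2:ℕ)) :=
    (memℓp_two_iff _).1 (lp.memℓp f)
  apply (memℓp_two_iff _).2
  rw [← (Equiv.sigmaFiberEquiv (fun x : V => G.dist v x)).summable_iff]
  refine (summable_sigma_of_nonneg fun p => pow_nonneg (norm_nonneg _) _).2
    ⟨fun n => Summable.of_finite, ?_⟩
  refine Summable.of_nonneg_of_le (fun n => tsum_nonneg fun x => pow_nonneg (norm_nonneg _) _)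
    (fun n => ?_) hfsum
  show (∑' (x : {x : V // G.dist v x = n}), ‖PsiF G v (f : ∀ _, ℂ) x.1‖ ^ (2:ℕ)) ≤ _
  rw [tsum_fiber hfin (fun y => ‖PsiF G v (f : ∀ _, ℂ) y‖ ^ (2:ℕ)) n]
  by_cases hn : (sphere G v n).ncard = 0
  · rw [sum_empty_sphere hfin _ hn]
    positivity
  · have hconst : ∀ y ∈ (hfin n).toFinset, ‖PsiF G v (f : ∀ _, ℂ) y‖ ^ (2:ℕ)
        = ‖(SQ G v n)⁻¹ * (f : ∀ _, ℂ) n‖ ^ (2:ℕ) := by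
      intro y hy
      have hd : G.dist v y = n := (hfin n).mem_toFinset.1 hy
      rw [PsiF, hd]
    rw [Finset.sum_congr rfl hconst, Finset.sum_const, toFinset_card_eq hfin n,
      nsmul_eq_mul]
    apply le_of_eq
    have h1 : ‖SQ G v n‖ = Real.sqrt ((sphere G v n).ncard) := by
      rw [SQ, Complex.norm_real, Real.norm_of_nonneg (Real.sqrt_nonneg _)]
    have h3 : (0:ℝ) < ((sphere G v n).ncard : ℝ) :=
      Nat.cast_pos.2 (Nat.pos_of_ne_zero hn)
    rw [norm_mul, norm_inv, h1, mul_pow, inv_pow, Real.sq_sqrt h3.le]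
    field_simp

lemma psi_phi (hG : G.LocallyFinite) (hAT : IsAntitree G v)
    (hfin : ∀ n, (sphere G v n : Set V).Finite)
    {z : ℂ} (hz : z ≠ 0)
    (g : V → ℂ) (hg : ∀ x, adjA G hG g x = z * g x) (x : V) :
    PsiF G v (PhiF G v hfin g) x = g x := by
  have hrad := radial_of_eigen hG hAT hfin hz g hg
  have hs : (sphere G v (G.dist v x)).ncard ≠ 0 := ncard_ne_zero_of_dist hfin rfl
  rw [PsiF, PhiF, sum_sphere_eq hfin g hrad rfl, ← SQ_sq (G.dist v x)]
  field_simp [SQ_ne (G.dist v x) hs]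

lemma phi_psi (hconn : G.Connected)
    (hfin : ∀ n, (sphere G v n : Set V).Finite)
    (a : ℕ → ℝ)
    (ha : ∀ n, a n = Real.sqrt
      (((sphere G v n).ncard : ℝ) * ((sphere G v (n + 1)).ncard : ℝ)))
    {z : ℂ} (hz : z ≠ 0)
    (f : ℕ → ℂ) (hf : ∀ n, jacA a (fun _ => 0) f n = z * f n) (n : ℕ) :
    PhiF G v hfin (PsiF G v f) n = f n := by
  by_cases hn : (sphere G v n).ncard = 0
  · rw [PhiF, sum_empty_sphere hfin _ hn, mul_zero, psi_J0 hconn a ha hz f hf hn]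
  · rw [PhiF, sum_psi hfin f n]
    field_simp [SQ_ne n hn]

lemma PhiF_add (hfin : ∀ n, (sphere G v n : Set V).Finite) (g₁ g₂ : V → ℂ) (n : ℕ) :
    PhiF G v hfin (g₁ + g₂) n = PhiF G v hfin g₁ n + PhiF G v hfin g₂ n := by
  simp only [PhiF, Pi.add_apply, Finset.sum_add_distrib]
  ring

lemma PhiF_smul (hfin : ∀ n, (sphere G v n : Set V).Finite) (c : ℂ) (g : V → ℂ) (n : ℕ) :
    PhiF G v hfin (c • g) n = c * PhiF G v hfin g n := by
  simp only [PhiF, Pi.smul_apply, smul_eq_mul, ← Finset.mul_sum]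
  ring

lemma PsiF_add (g₁ g₂ : ℕ → ℂ) (x : V) :
    PsiF G v (g₁ + g₂) x = PsiF G v g₁ x + PsiF G v g₂ x := by
  simp only [PsiF, Pi.add_apply]
  ring

lemma PsiF_smul (c : ℂ) (g : ℕ → ℂ) (x : V) :
    PsiF G v (c • g) x = c * PsiF G v g x := by
  simp only [PsiF, Pi.smul_apply, smul_eq_mul]
  ring

end Corr2

lemma rank_Ksub_eq {V : Type} (G : SimpleGraph V) (hG : G.LocallyFinite) (v : V)
    (hAT : IsAntitree G v) (a : ℕ → ℝ)
    (ha : ∀ n, a n = Real.sqrt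
      (((sphere G v n).ncard : ℝ) * ((sphere G v (n + 1)).ncard : ℝ)))
    (z : ℂ) (hz : z ≠ 0) :
    Module.rank ℂ (Ksub (MA G) (NA G hG) z)
      = Module.rank ℂ (Ksub (MJ a fun _ => 0) NJ z) := by
  have hconn := hAT.1
  have hfin : ∀ n, (sphere G v n : Set V).Finite := sphere_finite hG hconn
  have hKA : ∀ g : L2 V, g ∈ Ksub (MA G) (NA G hG) z →
      ∀ x, adjA G hG (g : ∀ _, ℂ) x = z * (g : ∀ _, ℂ) x := by
    intro g hg x
    rw [← Lfun_MA G hG]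
    exact hg x
  have hKA' : ∀ g : L2 V, (∀ x, adjA G hG (g : ∀ _, ℂ) x = z * (g : ∀ _, ℂ) x) →
      g ∈ Ksub (MA G) (NA G hG) z := by
    intro g hg x
    rw [Lfun_MA G hG]
    exact hg x
  have hKJ : ∀ f : L2 ℕ, f ∈ Ksub (MJ a fun _ => 0) NJ z →
      ∀ n, jacA a (fun _ => 0) (f : ∀ _, ℂ) n = z * (f : ∀ _, ℂ) n := by
    intro f hf n
    rw [← Lfun_MJ a _]
    exact hf n
  have hKJ' : ∀ f : L2 ℕ, (∀ n, jacA a (fun _ => 0) (f : ∀ _, ℂ) n = z * (f : ∀ _, ℂ) n) →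
      f ∈ Ksub (MJ a fun _ => 0) NJ z := by
    intro f hf n
    rw [Lfun_MJ a _]
    exact hf n
  let Φ : Ksub (MA G) (NA G hG) z →ₗ[ℂ] Ksub (MJ a fun _ => 0) NJ z :=
    { toFun := fun g =>
        ⟨⟨PhiF G v hfin ((g : L2 V) : ∀ _, ℂ),
          phi_memlp hG hAT hfin hz _ (hKA _ g.2)⟩,
          hKJ' _ (fun n => phi_jac hG hAT hfin a ha hz _ (hKA _ g.2) n)⟩
      map_add' := by
        intro g h
        apply Subtype.ext
        change _ = (_ : L2 ℕ) + _
        apply lp.ext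
        funext n
        rw [lp.coeFn_add, Pi.add_apply]
        have hco : (((g + h : ↥(Ksub (MA G) (NA G hG) z)) : L2 V) : ∀ _, ℂ)
            = ((g : L2 V) : ∀ _, ℂ) + ((h : L2 V) : ∀ _, ℂ) := by
          rw [Submodule.coe_add, lp.coeFn_add]
        change PhiF G v hfin (((g + h : ↥(Ksub (MA G) (NA G hG) z)) : L2 V) : ∀ _, ℂ) n
            = PhiF G v hfin ((g : L2 V) : ∀ _, ℂ) n + PhiF G v hfin ((h : L2 V) : ∀ _, ℂ) n
        rw [hco]
        exact PhiF_add hfin _ _ n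
      map_smul' := by
        intro c g
        apply Subtype.ext
        rw [RingHom.id_apply]
        change _ = c • (_ : L2 ℕ)
        apply lp.ext
        funext n
        rw [lp.coeFn_smul, Pi.smul_apply, smul_eq_mul]
        have hco : (((c • g : ↥(Ksub (MA G) (NA G hG) z)) : L2 V) : ∀ _, ℂ)
            = c • ((g : L2 V) : ∀ _, ℂ) := by
          rw [Submodule.coe_smul, lp.coeFn_smul]
        change PhiF G v hfin (((c • g : ↥(Ksub (MA G) (NA G hG) z)) : L2 V) : ∀ _, ℂ) n
            = c * PhiF G v hfin ((g : L2 V) : ∀ _, ℂ) n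
        rw [hco]
        exact PhiF_smul hfin c _ n }
  let Ψ : Ksub (MJ a fun _ => 0) NJ z →ₗ[ℂ] Ksub (MA G) (NA G hG) z :=
    { toFun := fun f =>
        ⟨⟨PsiF G v ((f : L2 ℕ) : ∀ _, ℂ),
          psi_memlp hconn hfin a ha hz _ (hKJ _ f.2)⟩,
          hKA' _ (fun x => psi_adj hG hAT hfin a ha hz _ (hKJ _ f.2) x)⟩
      map_add' := by
        intro g h
        apply Subtype.ext
        change _ = (_ : L2 V) + _
        apply lp.ext
        funext x
        rw [lp.coeFn_add, Pi.add_apply]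
        have hco : (((g + h : ↥(Ksub (MJ a fun _ => 0) NJ z)) : L2 ℕ) : ∀ _, ℂ)
            = ((g : L2 ℕ) : ∀ _, ℂ) + ((h : L2 ℕ) : ∀ _, ℂ) := by
          rw [Submodule.coe_add, lp.coeFn_add]
        change PsiF G v (((g + h : ↥(Ksub (MJ a fun _ => 0) NJ z)) : L2 ℕ) : ∀ _, ℂ) x
            = PsiF G v ((g : L2 ℕ) : ∀ _, ℂ) x + PsiF G v ((h : L2 ℕ) : ∀ _, ℂ) x
        rw [hco]
        exact PsiF_add _ _ x
      map_smul' := by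
        intro c g
        apply Subtype.ext
        rw [RingHom.id_apply]
        change _ = c • (_ : L2 V)
        apply lp.ext
        funext x
        rw [lp.coeFn_smul, Pi.smul_apply, smul_eq_mul]
        have hco : (((c • g : ↥(Ksub (MJ a fun _ => 0) NJ z)) : L2 ℕ) : ∀ _, ℂ)
            = c • ((g : L2 ℕ) : ∀ _, ℂ) := by
          rw [Submodule.coe_smul, lp.coeFn_smul]
        change PsiF G v (((c • g : ↥(Ksub (MJ a fun _ => 0) NJ z)) : L2 ℕ) : ∀ _, ℂ) x
            = c * PsiF G v ((g : L2 ℕ) : ∀ _, ℂ) x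
        rw [hco]
        exact PsiF_smul c _ x }
  have hΨΦ : ∀ g, Ψ (Φ g) = g := by
    intro g
    apply Subtype.ext
    apply lp.ext
    funext x
    change PsiF G v (PhiF G v hfin ((g : L2 V) : ∀ _, ℂ)) x = ((g : L2 V) : ∀ _, ℂ) x
    exact psi_phi hG hAT hfin hz _ (hKA _ g.2) x
  have hΦΨ : ∀ f, Φ (Ψ f) = f := by
    intro f
    apply Subtype.ext
    apply lp.ext
    funext n
    change PhiF G v hfin (PsiF G v ((f : L2 ℕ) : ∀ _, ℂ)) n = ((f : L2 ℕ) : ∀ _, ℂ) n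
    exact phi_psi hconn hfin a ha hz _ (hKJ _ f.2) n
  exact (LinearEquiv.ofLinear Φ Ψ (LinearMap.ext hΦΨ) (LinearMap.ext hΨΦ)).rank_eq










/-- The adjacency operator of a locally finite antitree with sphere
sizes `s_n` has the same deficiency indices as the Jacobi matrix with off-diagonal
entries `a_n = √(s_n s_{n+1})` and zero diagonal. -/
theorem antitree_jacobi_same_deficiency {V : Type} [Countable V]
    (G : SimpleGraph V) (hG : G.LocallyFinite) (v : V) (hAT : IsAntitree G v)
    (a : ℕ → ℝ)
    (ha : ∀ n, a n = Real.sqrt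
      (((sphere G v n).ncard : ℝ) * ((sphere G v (n + 1)).ncard : ℝ))) :
    etaP (adjOp G hG) = etaP (jacOp a fun _ => 0) ∧
    etaM (adjOp G hG) = etaM (jacOp a fun _ => 0) := by
  constructor
  · rw [etaP, etaP,
      rank_defSubspace (MA_mem G hG) (MA_symm G) (adjOp_domain G hG) (adjOp_apply G hG)
        Complex.I,
      rank_defSubspace (MJ_mem a fun _ => 0) (MJ_symm a fun _ => 0) (jacOp_domain a _)
        (jacOp_apply a _) Complex.I]
    exact rank_Ksub_eq G hG v hAT a ha Complex.I Complex.I_ne_zero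
  · rw [etaM, etaM,
      rank_defSubspace (MA_mem G hG) (MA_symm G) (adjOp_domain G hG) (adjOp_apply G hG)
        (-Complex.I),
      rank_defSubspace (MJ_mem a fun _ => 0) (MJ_symm a fun _ => 0) (jacOp_domain a _)
        (jacOp_apply a _) (-Complex.I)]
    exact rank_Ksub_eq G hG v hAT a ha (-Complex.I) (neg_ne_zero.2 Complex.I_ne_zero)

end DefIdx
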